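/- Refined elasticity bound: Let G = (V,E,r) be a graph and let k ≥ 2. If an element a ∈ A(G) can be written both as a sum of k atoms and as a sum of l atoms, then l ≤ (k − 1)·|V| + 1. -/

import Mathlib

/-- An agglomeration on the graph given by `r : E → Sym2 V`. -/
def IsAgg {V E : Type*} (r : E → Sym2 V) (a : (V → ℕ) × (E → ℕ)) : Prop :=
  ∀ (e : E) (v : V), v ∈ r e → a.2 e ≤ a.1 v

/-- An atom of the monoid of agglomerations. -/
def IsAtomAgg {V E : Type*} (r : E → Sym2 V) (a : (V → ℕ) × (E → ℕ)) : Prop :=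
  IsAgg r a ∧ a ≠ 0 ∧
    ∀ b c : (V → ℕ) × (E → ℕ), IsAgg r b → IsAgg r c → a = b + c → b = 0 ∨ c = 0



/-- Key covering lemma: if a nonempty finite set `S` is covered by finsets `T ∈ L`
(each `T ⊆ S`) and cannot be split into a nontrivial part `A` with every `T` inside or
disjoint from `A`, then `|S| ≤ 1 + ∑ (|T| - 1)`. Stated contrapositively. -/
lemma key_cover {α : Type*} [DecidableEq α] :
    ∀ n (L : Multiset (Finset α)) (S : Finset α), Multiset.card L ≤ n →
      S.Nonempty → (∀ T ∈ L, T ⊆ S) → (∀ v ∈ S, ∃ T ∈ L, v ∈ T) →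
      2 + (L.map (fun T => T.card - 1)).sum ≤ S.card →
      ∃ A, A ⊆ S ∧ A.Nonempty ∧ A ≠ S ∧ ∀ T ∈ L, T ⊆ A ∨ T ∩ A = ∅ := by
  intro n
  induction n with
  | zero =>
    intro L S hcard hS hsub hcov hbig
    obtain ⟨v, hv⟩ := hS
    have : L = 0 := Multiset.card_eq_zero.mp (Nat.le_zero.mp hcard)
    subst this
    obtain ⟨T, hT, -⟩ := hcov v hv
    exact absurd hT (Multiset.notMem_zero T)
  | succ n ih =>
    intro L S hcard hS hsub hcov hbig
    by_cases hmerge : ∃ T ∈ L, ∃ U ∈ L.erase T, (T ∩ U).Nonempty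
    · obtain ⟨T, hT, U, hU, hTU⟩ := hmerge
      have hUL : U ∈ L := Multiset.mem_of_mem_erase hU
      have hL : L = T ::ₘ U ::ₘ (L.erase T).erase U := by
        conv_lhs => rw [← Multiset.cons_erase hT, ← Multiset.cons_erase hU]
      set R := (L.erase T).erase U with hR
      set L' := (T ∪ U) ::ₘ R with hL'
      have hcard' : Multiset.card L' ≤ n := by
        have := congrArg Multiset.card hL
        simp [L'] at *
        omega
      have hsub' : ∀ W ∈ L', W ⊆ S := by
        intro W hW
        rcases Multiset.mem_cons.mp hW with h | h
        · subst h; exact Finset.union_subset (hsub T hT) (hsub U hUL)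
        · exact hsub W (by rw [hL]; exact Multiset.mem_cons_of_mem (Multiset.mem_cons_of_mem h))
      have hcov' : ∀ v ∈ S, ∃ W ∈ L', v ∈ W := by
        intro v hv
        obtain ⟨W, hWL, hvW⟩ := hcov v hv
        rw [hL] at hWL
        rcases Multiset.mem_cons.mp hWL with h | h
        · exact ⟨T ∪ U, Multiset.mem_cons_self _ _, by subst h; exact Finset.mem_union_left _ hvW⟩
        rcases Multiset.mem_cons.mp h with h | h
        · exact ⟨T ∪ U, Multiset.mem_cons_self _ _, by subst h; exact Finset.mem_union_right _ hvW⟩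
        · exact ⟨W, Multiset.mem_cons_of_mem h, hvW⟩
      have hbig' : 2 + (L'.map (fun T => T.card - 1)).sum ≤ S.card := by
        have hTc : 1 ≤ T.card := Finset.card_pos.mpr (hTU.mono Finset.inter_subset_left)
        have hUc : 1 ≤ U.card := Finset.card_pos.mpr (hTU.mono Finset.inter_subset_right)
        have hTUc : 1 ≤ (T ∩ U).card := Finset.card_pos.mpr hTU
        have hcui := Finset.card_union_add_card_inter T U
        have e1 : (L.map (fun T => T.card - 1)).sum
            = (T.card - 1) + ((U.card - 1) + (R.map (fun T => T.card - 1)).sum) := by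
          rw [hL]; simp
        have e2 : (L'.map (fun T => T.card - 1)).sum
            = ((T ∪ U).card - 1) + (R.map (fun T => T.card - 1)).sum := by
          simp [L']
        omega
      obtain ⟨A, hAS, hA1, hA2, hA3⟩ := ih L' S hcard' hS hsub' hcov' hbig'
      refine ⟨A, hAS, hA1, hA2, ?_⟩
      intro W hW
      have hTUA := hA3 (T ∪ U) (Multiset.mem_cons_self _ _)
      rw [hL] at hW
      have aux : ∀ X : Finset α, X ⊆ T ∪ U → X ⊆ A ∨ X ∩ A = ∅ := by
        intro X hX
        rcases hTUA with h | h
        · exact Or.inl (hX.trans h)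
        · exact Or.inr (Finset.subset_empty.mp (h ▸ Finset.inter_subset_inter hX (subset_refl A)))
      rcases Multiset.mem_cons.mp hW with h | h
      · subst h; exact aux W Finset.subset_union_left
      rcases Multiset.mem_cons.mp h with h | h
      · subst h; exact aux W Finset.subset_union_right
      · exact hA3 W (Multiset.mem_cons_of_mem h)
    · obtain ⟨v, hv⟩ := hS
      obtain ⟨T, hTL, hvT⟩ := hcov v hv
      have hTc : T.card - 1 ≤ (L.map (fun T => T.card - 1)).sum :=
        Multiset.single_le_sum (fun x _ => Nat.zero_le x) _
          (Multiset.mem_map.mpr ⟨T, hTL, rfl⟩)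
      have hT1 : 1 ≤ T.card := Finset.card_pos.mpr ⟨v, hvT⟩
      refine ⟨T, hsub T hTL, ⟨v, hvT⟩, ?_, ?_⟩
      · intro h
        rw [h] at hTc
        omega
      · intro W hW
        by_cases hWT : W = T
        · exact Or.inl (hWT ▸ subset_refl W)
        · have hWe : W ∈ L.erase T := (Multiset.mem_erase_of_ne hWT).mpr hW
          by_contra hcon
          push_neg at hcon
          refine hmerge ⟨T, hTL, W, hWe, ?_⟩
          rw [Finset.inter_comm]
          exact hcon.2

lemma sym2_exists_mem {V : Type*} (z : Sym2 V) : ∃ v, v ∈ z :=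
  Sym2.ind (fun x y => ⟨x, Sym2.mem_mk_left x y⟩) z

lemma atom_le_one {V E : Type*} (r : E → Sym2 V) (a : (V → ℕ) × (E → ℕ))
    (h : IsAtomAgg r a) : (∀ v, a.1 v ≤ 1) ∧ (∀ e, a.2 e ≤ 1) := by
  obtain ⟨ha, hne, hsplit⟩ := h
  set b : (V → ℕ) × (E → ℕ) := (fun v => min (a.1 v) 1, fun e => min (a.2 e) 1) with hb
  set c : (V → ℕ) × (E → ℕ) :=
    (fun v => a.1 v - min (a.1 v) 1, fun e => a.2 e - min (a.2 e) 1) with hc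
  have hbagg : IsAgg r b := fun e v hv => by
    have := ha e v hv; simp only [hb]; omega
  have hcagg : IsAgg r c := fun e v hv => by
    have := ha e v hv; simp only [hc]; omega
  have habc : a = b + c := by
    refine Prod.ext (funext fun v => ?_) (funext fun e => ?_) <;>
      simp only [hb, hc, Prod.fst_add, Prod.snd_add, Pi.add_apply] <;> omega
  rcases hsplit b c hbagg hcagg habc with h0 | h0
  · exfalso
    apply hne
    refine Prod.ext (funext fun v => ?_) (funext fun e => ?_)
    · have : b.1 v = 0 := by rw [h0]; rfl
      simp only [hb] at this
      simpa using Nat.le_antisymm (by omega) (Nat.zero_le _)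
    · have : b.2 e = 0 := by rw [h0]; rfl
      simp only [hb] at this
      simpa using Nat.le_antisymm (by omega) (Nat.zero_le _)
  · constructor
    · intro v
      have : c.1 v = 0 := by rw [h0]; rfl
      simp only [hc] at this
      omega
    · intro e
      have : c.2 e = 0 := by rw [h0]; rfl
      simp only [hc] at this
      omega

lemma atom_exists_vertex {V E : Type*} (r : E → Sym2 V) (a : (V → ℕ) × (E → ℕ))
    (h : IsAtomAgg r a) : ∃ v, 1 ≤ a.1 v := by
  obtain ⟨ha, hne, -⟩ := h
  by_contra hcon
  push_neg at hcon
  apply hne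
  have h1 : ∀ v, a.1 v = 0 := fun v => by have := hcon v; omega
  refine Prod.ext (funext fun v => h1 v) (funext fun e => ?_)
  obtain ⟨v, hv⟩ := sym2_exists_mem (r e)
  have := ha e v hv
  have := h1 v
  simp only [Prod.snd_zero, Pi.zero_apply]
  omega


/-- **Refined elasticity bound**: if `a ∈ A(G)` is both a sum of `k ≥ 2` atoms and a sum
of `l` atoms, then `l ≤ (k − 1)·|V| + 1`. -/
theorem refined_elasticity_bound {V E : Type*} [Fintype V] [Fintype E]
    (r : E → Sym2 V) (hr : ∀ e : E, ¬ (r e).IsDiag)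
    (a : (V → ℕ) × (E → ℕ)) (ha : IsAgg r a)
    (k l : ℕ) (hk : 2 ≤ k)
    (hka : ∃ b : Fin k → (V → ℕ) × (E → ℕ), (∀ i, IsAtomAgg r (b i)) ∧ a = ∑ i, b i)
    (hla : ∃ c : Fin l → (V → ℕ) × (E → ℕ), (∀ i, IsAtomAgg r (c i)) ∧ a = ∑ i, c i) :
    l ≤ (k - 1) * Fintype.card V + 1 := by
  classical
  obtain ⟨b, hb, hab⟩ := hka
  obtain ⟨c, hc, hac⟩ := hla
  -- component descriptions of a
  have haVb : ∀ v, a.1 v = ∑ j, (b j).1 v := fun v => by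
    rw [hab, Prod.fst_sum, Finset.sum_apply]
  have haVc : ∀ v, a.1 v = ∑ i, (c i).1 v := fun v => by
    rw [hac, Prod.fst_sum, Finset.sum_apply]
  have haEc : ∀ e, a.2 e = ∑ i, (c i).2 e := fun e => by
    rw [hac, Prod.snd_sum, Finset.sum_apply]
  -- the distinguished atom b0
  set i0 : Fin k := ⟨0, by omega⟩ with hi0
  set b0 := b i0 with hb0def
  obtain ⟨hb0agg, hb0ne, hb0split⟩ := hb i0
  have hb0le := atom_le_one r b0 (hb i0)
  have hble : ∀ j, (∀ v, (b j).1 v ≤ 1) := fun j => (atom_le_one r (b j) (hb j)).1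
  have hcle : ∀ i, (∀ v, (c i).1 v ≤ 1) := fun i => (atom_le_one r (c i) (hc i)).1
  -- b0 ≤ a
  have hb0a : ∀ v, b0.1 v ≤ a.1 v := fun v => by
    rw [haVb v]
    exact Finset.single_le_sum (f := fun j => (b j).1 v) (fun j _ => Nat.zero_le _)
      (Finset.mem_univ i0)
  have hb0aE : ∀ e, b0.2 e ≤ a.2 e := fun e => by
    rw [hab, Prod.snd_sum, Finset.sum_apply]
    exact Finset.single_le_sum (f := fun j => (b j).2 e) (fun j _ => Nat.zero_le _)
      (Finset.mem_univ i0)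
  -- supports
  set S : Finset V := Finset.univ.filter (fun v => 1 ≤ b0.1 v) with hSdef
  set Sc : Fin l → Finset V := fun i => Finset.univ.filter (fun v => 1 ≤ (c i).1 v) with hScdef
  set T : Fin l → Finset V := fun i => Sc i ∩ S with hTdef
  have hσS : ∑ v, b0.1 v = S.card := by
    rw [hSdef, Finset.card_filter]
    refine Finset.sum_congr rfl fun v _ => ?_
    have := hb0le.1 v; split <;> omega
  have hσSc : ∀ i, ∑ v, (c i).1 v = (Sc i).card := fun i => by
    rw [hScdef, Finset.card_filter]
    refine Finset.sum_congr rfl fun v _ => ?_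
    have := hcle i v; split <;> omega
  have hSne : S.Nonempty := by
    obtain ⟨v, hv⟩ := atom_exists_vertex r b0 (hb i0)
    exact ⟨v, Finset.mem_filter.mpr ⟨Finset.mem_univ v, hv⟩⟩
  have hScne : ∀ i, (Sc i).Nonempty := fun i => by
    obtain ⟨v, hv⟩ := atom_exists_vertex r (c i) (hc i)
    exact ⟨v, Finset.mem_filter.mpr ⟨Finset.mem_univ v, hv⟩⟩
  -- the multiset of covering pieces
  set L : Multiset (Finset V) := Multiset.map T Finset.univ.val with hLdef
  have hmemL : ∀ i : Fin l, T i ∈ L :=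
    fun i => Multiset.mem_map.mpr ⟨i, Finset.mem_val.mpr (Finset.mem_univ i), rfl⟩
  have hsub : ∀ X ∈ L, X ⊆ S := by
    intro X hX
    obtain ⟨i, -, rfl⟩ := Multiset.mem_map.mp hX
    exact Finset.inter_subset_right
  have hcov : ∀ v ∈ S, ∃ X ∈ L, v ∈ X := by
    intro v hv
    have h1 : 1 ≤ b0.1 v := (Finset.mem_filter.mp hv).2
    have h2 : 1 ≤ ∑ i, (c i).1 v := by rw [← haVc v]; exact le_trans h1 (hb0a v)
    have : ∃ i : Fin l, 1 ≤ (c i).1 v := by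
      by_contra hcon
      push_neg at hcon
      have : ∑ i, (c i).1 v = 0 := Finset.sum_eq_zero fun i _ => by have := hcon i; omega
      omega
    obtain ⟨i, hi⟩ := this
    exact ⟨T i, hmemL i, Finset.mem_inter.mpr
      ⟨Finset.mem_filter.mpr ⟨Finset.mem_univ v, hi⟩, hv⟩⟩
  -- key inequality via the covering lemma and atomicity of b0
  have hkey : S.card ≤ 1 + (Multiset.map (fun X => X.card - 1) L).sum := by
    by_contra hcon
    push_neg at hcon
    obtain ⟨A, hAS, hA1, hA2, hA3⟩ :=
      key_cover (Multiset.card L) L S le_rfl hSne hsub hcov (by omega)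
    -- every edge of b0 whose endpoint set meets A lies entirely in A
    have hedgeS : ∀ e, 1 ≤ b0.2 e → ∀ w ∈ r e, w ∈ S := by
      intro e he w hw
      exact Finset.mem_filter.mpr ⟨Finset.mem_univ w, le_trans he (hb0agg e w hw)⟩
    have hedgeA : ∀ e, 1 ≤ b0.2 e → (∃ w ∈ r e, w ∈ A) → ∀ u ∈ r e, u ∈ A := by
      intro e he ⟨w, hw, hwA⟩ u hu
      have h2 : 1 ≤ ∑ i, (c i).2 e := by rw [← haEc e]; exact le_trans he (hb0aE e)
      have : ∃ i : Fin l, 1 ≤ (c i).2 e := by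
        by_contra hcon2
        push_neg at hcon2
        have : ∑ i, (c i).2 e = 0 := Finset.sum_eq_zero fun i _ => by have := hcon2 i; omega
        omega
      obtain ⟨i, hi⟩ := this
      have hmem : ∀ z ∈ r e, z ∈ T i := by
        intro z hz
        refine Finset.mem_inter.mpr ⟨Finset.mem_filter.mpr
          ⟨Finset.mem_univ z, le_trans hi ((hc i).1 e z hz)⟩, hedgeS e he z hz⟩
      rcases hA3 (T i) (hmemL i) with h | h
      · exact h (hmem u hu)
      · exfalso
        have : w ∈ T i ∩ A := Finset.mem_inter.mpr ⟨hmem w hw, hwA⟩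
        rw [h] at this
        exact absurd this (Finset.notMem_empty w)
    -- split b0 along A
    set x : (V → ℕ) × (E → ℕ) :=
      (fun v => if v ∈ A then b0.1 v else 0,
       fun e => if ∃ w ∈ r e, w ∈ A then b0.2 e else 0) with hx
    set y : (V → ℕ) × (E → ℕ) :=
      (fun v => if v ∈ A then 0 else b0.1 v,
       fun e => if ∃ w ∈ r e, w ∈ A then 0 else b0.2 e) with hy
    have hxagg : IsAgg r x := by
      intro e v hv
      simp only [hx]
      by_cases hE : ∃ w ∈ r e, w ∈ A
      · simp only [hE, if_true]
        by_cases h1 : 1 ≤ b0.2 e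
        · have : v ∈ A := hedgeA e h1 hE v hv
          simp only [this, if_true]
          exact hb0agg e v hv
        · omega
      · simp only [hE, if_false]
        exact Nat.zero_le _
    have hyagg : IsAgg r y := by
      intro e v hv
      simp only [hy]
      by_cases hE : ∃ w ∈ r e, w ∈ A
      · simp only [hE, if_true]
        exact Nat.zero_le _
      · simp only [hE, if_false]
        have hvA : v ∉ A := fun hvA => hE ⟨v, hv, hvA⟩
        simp only [hvA, if_false]
        exact hb0agg e v hv
    have hxy : b0 = x + y := by
      refine Prod.ext (funext fun v => ?_) (funext fun e => ?_) <;>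
        simp only [hx, hy, Prod.fst_add, Prod.snd_add, Pi.add_apply]
      · by_cases h : v ∈ A <;> simp [h]
      · by_cases h : ∃ w ∈ r e, w ∈ A <;> simp [h]
    rcases hb0split x y hxagg hyagg hxy with h0 | h0
    · obtain ⟨v, hvA⟩ := hA1
      have hvS : v ∈ S := hAS hvA
      have : x.1 v = 0 := by rw [h0]; rfl
      simp only [hx, hvA, if_true] at this
      have := (Finset.mem_filter.mp hvS).2
      omega
    · have hASs : A ⊂ S := HasSubset.Subset.ssubset_of_ne hAS hA2
      obtain ⟨v, hvS, hvA⟩ := Finset.exists_of_ssubset hASs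
      have : y.1 v = 0 := by rw [h0]; rfl
      simp only [hy, hvA, if_false] at this
      have := (Finset.mem_filter.mp hvS).2
      omega
  -- translate multiset sum to a finset sum
  have hLsum : (Multiset.map (fun X => X.card - 1) L).sum = ∑ i, ((T i).card - 1) := by
    rw [hLdef, Multiset.map_map]
    rfl
  -- lower bound for σ(a)
  have hσa : ∑ v, a.1 v = ∑ i, (Sc i).card := by
    calc ∑ v, a.1 v = ∑ v, ∑ i, (c i).1 v := Finset.sum_congr rfl fun v _ => haVc v
      _ = ∑ i, ∑ v, (c i).1 v := Finset.sum_comm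
      _ = ∑ i, (Sc i).card := Finset.sum_congr rfl fun i _ => hσSc i
  have h5 : l + ∑ i, ((T i).card - 1) ≤ ∑ v, a.1 v := by
    rw [hσa]
    calc l + ∑ i, ((T i).card - 1) = ∑ i : Fin l, (1 + ((T i).card - 1)) := by
          rw [Finset.sum_add_distrib]
          simp
      _ ≤ ∑ i, (Sc i).card := Finset.sum_le_sum fun i _ => by
          have h1 := Finset.card_pos.mpr (hScne i)
          have h2 : (T i).card ≤ (Sc i).card :=
            Finset.card_le_card (Finset.inter_subset_left)
          omega
  -- upper bound for σ(a)
  have h6 : ∑ v, a.1 v ≤ (k - 1) * Fintype.card V + S.card := by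
    have e1 : ∑ v, a.1 v = ∑ j, ∑ v, (b j).1 v := by
      calc ∑ v, a.1 v = ∑ v, ∑ j, (b j).1 v := Finset.sum_congr rfl fun v _ => haVb v
        _ = ∑ j, ∑ v, (b j).1 v := Finset.sum_comm
    have e2 : ∑ j ∈ Finset.univ.erase i0, (∑ v, (b j).1 v) + ∑ v, b0.1 v = ∑ j, ∑ v, (b j).1 v :=
      Finset.sum_erase_add _ _ (Finset.mem_univ i0)
    have e3 : ∑ j ∈ Finset.univ.erase i0, (∑ v, (b j).1 v) ≤ (k - 1) * Fintype.card V := by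
      have := Finset.sum_le_card_nsmul (Finset.univ.erase i0)
        (fun j => ∑ v, (b j).1 v) (Fintype.card V)
        (fun j _ => by
          calc ∑ v, (b j).1 v ≤ ∑ _v : V, 1 := Finset.sum_le_sum fun v _ => hble j v
            _ = Fintype.card V := by simp)
      have hcard : (Finset.univ.erase i0).card = k - 1 := by
        rw [Finset.card_erase_of_mem (Finset.mem_univ i0)]
        simp
      rw [hcard, smul_eq_mul] at this
      exact this
    omega
  omega
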